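/- Let A1 = U1 S1 V1ᵀ ∈ ℝ^{m×n} with S1 ∈ ℝ^{r×r} invertible and V1 ∈ ℝ^{n×r} having orthonormal columns, and let V0 ∈ ℝ^{n×r} be such that V1ᵀ V0 is invertible. Let U0 ∈ ℝ^{m×r} be arbitrary, and let Û ∈ ℝ^{m×k} have orthonormal columns with column space equal to the column space of the concatenated matrix (A1 V0 | U0) ∈ ℝ^{m×2r}. Then Û Ûᵀ A1 = A1. -/

import Mathlib

open Matrix

/-- Identity (11) in the exactness proof: the augmented orthonormal basis `Û`, spanning the
column space of `(A₁ V₀ | U₀)`, reproduces `A₁` under projection: `Û Ûᵀ A₁ = A₁`. -/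
theorem augmented_basis_reproduces_A
    {m n r k : ℕ}
    (U1 : Matrix (Fin m) (Fin r) ℝ) (S1 : Matrix (Fin r) (Fin r) ℝ)
    (V1 V0 : Matrix (Fin n) (Fin r) ℝ)
    (A1 : Matrix (Fin m) (Fin n) ℝ)
    (U0 : Matrix (Fin m) (Fin r) ℝ)
    (Uhat : Matrix (Fin m) (Fin k) ℝ)
    (hA1 : A1 = U1 * S1 * V1ᵀ)
    (hS1 : IsUnit S1)
    (hV1 : V1ᵀ * V1 = 1)
    (hV10 : IsUnit (V1ᵀ * V0))
    (hUhat : Uhatᵀ * Uhat = 1)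
    (hrange : LinearMap.range Uhat.mulVecLin
      = LinearMap.range (fromCols (A1 * V0) U0).mulVecLin) :
    Uhat * Uhatᵀ * A1 = A1 := by
  -- A1 factors through A1 * V0
  have hfac : A1 = A1 * V0 * ((V1ᵀ * V0)⁻¹ * V1ᵀ) := by
    have h1 : A1 * V0 = U1 * S1 * (V1ᵀ * V0) := by
      rw [hA1, Matrix.mul_assoc, Matrix.mul_assoc]
    calc A1 = U1 * S1 * V1ᵀ := hA1
      _ = U1 * S1 * ((V1ᵀ * V0) * (V1ᵀ * V0)⁻¹) * V1ᵀ := by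
          rw [Matrix.mul_nonsing_inv _ ((Matrix.isUnit_iff_isUnit_det _).mp hV10),
            Matrix.mul_one]
      _ = A1 * V0 * ((V1ᵀ * V0)⁻¹ * V1ᵀ) := by
          rw [h1]; simp only [Matrix.mul_assoc]
  -- every column of A1 lies in the range of Uhat
  have hmem : ∀ v : Fin n → ℝ, A1 *ᵥ v ∈ LinearMap.range Uhat.mulVecLin := by
    intro v
    rw [hrange]
    refine ⟨Sum.elim (((V1ᵀ * V0)⁻¹ * V1ᵀ) *ᵥ v) 0, ?_⟩
    simp only [mulVecLin_apply, fromCols_mulVec_sumElim, Matrix.mulVec_zero, add_zero]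
    conv_rhs => rw [hfac]
    simp only [← Matrix.mulVec_mulVec]
  -- conclude pointwise
  ext i j
  have := hmem (Pi.single j 1)
  obtain ⟨w, hw⟩ := this
  have key : (Uhat * Uhatᵀ * A1) *ᵥ (Pi.single j 1) = A1 *ᵥ (Pi.single j 1) := by
    rw [← Matrix.mulVec_mulVec, ← Matrix.mulVec_mulVec, ← hw, mulVecLin_apply,
      Matrix.mulVec_mulVec, Matrix.mulVec_mulVec, Matrix.mul_assoc, hUhat, Matrix.mul_one]
  have := congrFun key i
  simpa [Matrix.mulVec_single] using this
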